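/- Let 0 < p < 1, T > 0 and E₀ ≥ 0, let V be a real inner product space, and let γ : [0,T] → V have integrable derivative γ′ with ∫_0^T τ^p·‖γ′(τ)‖² dτ ≤ E₀. Then for all 0 ≤ τ₁ ≤ τ₂ ≤ T one has ‖γ(τ₂) − γ(τ₁)‖² ≤ (E₀/(1−p)) · (τ₂^{1−p} − τ₁^{1−p}). -/

import Mathlib

open MeasureTheory

set_option maxHeartbeats 2000000

/-- Equicontinuity estimate ((1.22)/(1.42)): a curve `γ : [0,T] → V` into a real
inner product space with integrable derivative `γ'` (i.e. `γ'` is integrable on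
`[0,T]` and `γ b - γ a = ∫_a^b γ'` for all `0 ≤ a ≤ b ≤ T`) whose weighted energy
`∫_0^T τ^p ‖γ'(τ)‖² dτ` is at most `E₀` satisfies
`‖γ(τ₂) - γ(τ₁)‖² ≤ (E₀/(1-p)) * (τ₂^{1-p} - τ₁^{1-p})` for all `0 ≤ τ₁ ≤ τ₂ ≤ T`. -/
theorem energy_holder_continuity (p T E₀ : ℝ) (hp : 0 < p) (hp1 : p < 1)
    (hT : 0 < T) (hE₀ : 0 ≤ E₀)
    (V : Type*) [NormedAddCommGroup V] [InnerProductSpace ℝ V] [CompleteSpace V]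
    (γ γ' : ℝ → V)
    (hint : IntegrableOn γ' (Set.Icc 0 T))
    (hderiv : ∀ a b : ℝ, 0 ≤ a → a ≤ b → b ≤ T → γ b - γ a = ∫ τ in a..b, γ' τ)
    (hEint : IntervalIntegrable (fun τ => τ ^ p * ‖γ' τ‖ ^ 2) volume 0 T)
    (hE : (∫ τ in (0:ℝ)..T, τ ^ p * ‖γ' τ‖ ^ 2) ≤ E₀) :
    ∀ τ₁ τ₂ : ℝ, 0 ≤ τ₁ → τ₁ ≤ τ₂ → τ₂ ≤ T →
      ‖γ τ₂ - γ τ₁‖ ^ 2 ≤ (E₀ / (1 - p)) * (τ₂ ^ (1 - p) - τ₁ ^ (1 - p)) := by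
  intro τ₁ τ₂ h1 h12 h2T
  have h1p : (0:ℝ) < 1 - p := by linarith
  set μ := volume.restrict (Set.Ioc τ₁ τ₂) with hμ
  set f : ℝ → ℝ := fun τ => τ ^ (p/2) * ‖γ' τ‖ with hf
  set g : ℝ → ℝ := fun τ => τ ^ (-(p/2)) with hg
  have hsub : Set.Ioc τ₁ τ₂ ⊆ Set.Ioc 0 T := fun x hx =>
    ⟨lt_of_le_of_lt h1 hx.1, le_trans hx.2 h2T⟩
  -- a.e. facts on μ
  have hmem : ∀ᵐ τ ∂μ, τ ∈ Set.Ioc τ₁ τ₂ :=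
    (ae_restrict_iff' measurableSet_Ioc).2 (Filter.Eventually.of_forall fun x hx => hx)
  -- measurability
  have hsub2 : Set.Ioc τ₁ τ₂ ⊆ Set.Icc 0 T :=
    Set.Ioc_subset_Icc_self.trans (Set.Icc_subset_Icc h1 h2T)
  have hγ2 : IntegrableOn γ' (Set.Ioc τ₁ τ₂) := hint.mono_set hsub2
  have hγm : AEStronglyMeasurable γ' μ := hγ2.aestronglyMeasurable
  have hmes1 : Measurable fun τ : ℝ => τ ^ (p/2) := by fun_prop
  have hmes2 : Measurable fun τ : ℝ => τ ^ (-(p/2)) := by fun_prop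
  have hfm : AEStronglyMeasurable f μ :=
    hmes1.aestronglyMeasurable.mul hγm.norm
  have hgm : AEStronglyMeasurable g μ :=
    hmes2.aestronglyMeasurable
  -- key algebraic identities on Ioc τ₁ τ₂
  have hsq_f : ∀ᵐ τ ∂μ, f τ ^ 2 = τ ^ p * ‖γ' τ‖ ^ 2 := by
    filter_upwards [hmem] with τ hτ
    have hτ0 : 0 < τ := lt_of_le_of_lt h1 hτ.1
    simp only [hf, mul_pow]
    rw [← Real.rpow_natCast (τ ^ (p/2)) 2, ← Real.rpow_mul hτ0.le]
    norm_num
  have hsq_g : ∀ᵐ τ ∂μ, g τ ^ 2 = τ ^ (-p) := by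
    filter_upwards [hmem] with τ hτ
    have hτ0 : 0 < τ := lt_of_le_of_lt h1 hτ.1
    simp only [hg]
    rw [← Real.rpow_natCast (τ ^ (-(p/2))) 2, ← Real.rpow_mul hτ0.le]
    norm_num
  have hfg : ∀ᵐ τ ∂μ, ‖γ' τ‖ = f τ * g τ := by
    filter_upwards [hmem] with τ hτ
    have hτ0 : 0 < τ := lt_of_le_of_lt h1 hτ.1
    simp only [hf, hg]
    rw [mul_comm (τ ^ (p/2)) ‖γ' τ‖, mul_assoc, ← Real.rpow_add hτ0]
    simp
  -- integrability of f² and g²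
  have hE2 : IntegrableOn (fun τ => τ ^ p * ‖γ' τ‖ ^ 2) (Set.Ioc 0 T) :=
    (intervalIntegrable_iff_integrableOn_Ioc_of_le hT.le).1 hEint
  have hf2int : Integrable (fun τ => f τ ^ 2) μ :=
    (hE2.mono_set hsub).congr (Filter.EventuallyEq.symm hsq_f)
  have hg2int : Integrable (fun τ => g τ ^ 2) μ :=
    ((intervalIntegrable_iff_integrableOn_Ioc_of_le h12).1
      (intervalIntegral.intervalIntegrable_rpow' (by linarith : (-1:ℝ) < -p))).congr
      (Filter.EventuallyEq.symm hsq_g)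
  -- Memℒp
  have hfL2 : MemLp f (ENNReal.ofReal 2) μ := by
    rw [show ENNReal.ofReal 2 = 2 by norm_num]
    exact (memLp_two_iff_integrable_sq hfm).2 hf2int
  have hgL2 : MemLp g (ENNReal.ofReal 2) μ := by
    rw [show ENNReal.ofReal 2 = 2 by norm_num]
    exact (memLp_two_iff_integrable_sq hgm).2 hg2int
  have hf_nn : 0 ≤ᵐ[μ] f := by
    filter_upwards [hmem] with τ hτ
    have hτ0 : 0 < τ := lt_of_le_of_lt h1 hτ.1
    exact mul_nonneg (Real.rpow_nonneg hτ0.le _) (norm_nonneg _)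
  have hg_nn : 0 ≤ᵐ[μ] g := by
    filter_upwards [hmem] with τ hτ
    exact Real.rpow_nonneg (le_trans h1 hτ.1.le) _
  -- Hölder
  have hconj : Real.HolderConjugate 2 2 := Real.holderConjugate_iff.mpr ⟨one_lt_two, by norm_num⟩
  have holder := integral_mul_le_Lp_mul_Lq_of_nonneg hconj hf_nn hg_nn hfL2 hgL2
  -- bound the two factors
  have hA_eq : ∫ τ, f τ ^ (2:ℝ) ∂μ = ∫ τ, τ ^ p * ‖γ' τ‖ ^ 2 ∂μ := by
    refine integral_congr_ae ?_
    filter_upwards [hsq_f, hf_nn] with τ hτ hτn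
    rw [show (2:ℝ) = ((2:ℕ):ℝ) by norm_num, Real.rpow_natCast, hτ]
  have hA_le : ∫ τ, f τ ^ (2:ℝ) ∂μ ≤ E₀ := by
    rw [hA_eq]
    have hnn : 0 ≤ᵐ[volume.restrict (Set.Ioc 0 T)] fun τ => τ ^ p * ‖γ' τ‖ ^ 2 := by
      refine (ae_restrict_iff' measurableSet_Ioc).2 (Filter.Eventually.of_forall fun x hx => ?_)
      exact mul_nonneg (Real.rpow_nonneg hx.1.le _) (by positivity)
    calc ∫ τ, τ ^ p * ‖γ' τ‖ ^ 2 ∂μ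
        ≤ ∫ τ in Set.Ioc 0 T, τ ^ p * ‖γ' τ‖ ^ 2 :=
          setIntegral_mono_set hE2 hnn (HasSubset.Subset.eventuallyLE hsub)
      _ = ∫ τ in (0:ℝ)..T, τ ^ p * ‖γ' τ‖ ^ 2 := by
          rw [intervalIntegral.integral_of_le hT.le]
      _ ≤ E₀ := hE
  have hB_eq : ∫ τ, g τ ^ (2:ℝ) ∂μ = (τ₂ ^ (1-p) - τ₁ ^ (1-p)) / (1-p) := by
    have : ∫ τ, g τ ^ (2:ℝ) ∂μ = ∫ τ in τ₁..τ₂, τ ^ (-p) := by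
      rw [intervalIntegral.integral_of_le h12]
      refine integral_congr_ae ?_
      filter_upwards [hsq_g] with τ hτ
      rw [show (2:ℝ) = ((2:ℕ):ℝ) by norm_num, Real.rpow_natCast, hτ]
    rw [this, integral_rpow (Or.inl (by linarith : (-1:ℝ) < -p)),
      show -p + 1 = 1 - p by ring]
  have hΔnn : 0 ≤ τ₂ ^ (1-p) - τ₁ ^ (1-p) :=
    sub_nonneg.2 (Real.rpow_le_rpow h1 h12 h1p.le)
  have hB_nn : 0 ≤ ∫ τ, g τ ^ (2:ℝ) ∂μ := by
    rw [hB_eq]; positivity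
  have hA_nn : 0 ≤ ∫ τ, f τ ^ (2:ℝ) ∂μ := by
    rw [hA_eq]
    refine integral_nonneg_of_ae ?_
    filter_upwards [hmem] with τ hτ
    exact mul_nonneg (Real.rpow_nonneg (le_trans h1 hτ.1.le) _) (by positivity)
  -- norm bound
  have hnorm : ‖γ τ₂ - γ τ₁‖ ≤ ∫ τ, f τ * g τ ∂μ := by
    rw [hderiv τ₁ τ₂ h1 h12 h2T]
    calc ‖∫ τ in τ₁..τ₂, γ' τ‖ ≤ ∫ τ in τ₁..τ₂, ‖γ' τ‖ :=
          intervalIntegral.norm_integral_le_integral_norm h12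
      _ = ∫ τ, ‖γ' τ‖ ∂μ := by rw [intervalIntegral.integral_of_le h12]
      _ = ∫ τ, f τ * g τ ∂μ := integral_congr_ae hfg
  have hchain : ‖γ τ₂ - γ τ₁‖ ≤
      E₀ ^ (1/2:ℝ) * ((τ₂ ^ (1-p) - τ₁ ^ (1-p)) / (1-p)) ^ (1/2:ℝ) := by
    refine le_trans hnorm (le_trans holder ?_)
    rw [hB_eq]
    gcongr

  have hfinal := pow_le_pow_left₀ (norm_nonneg _) hchain 2
  calc ‖γ τ₂ - γ τ₁‖ ^ 2
      ≤ (E₀ ^ (1/2:ℝ) * ((τ₂ ^ (1-p) - τ₁ ^ (1-p)) / (1-p)) ^ (1/2:ℝ)) ^ 2 := hfinal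
    _ = E₀ * ((τ₂ ^ (1-p) - τ₁ ^ (1-p)) / (1-p)) := by
        rw [mul_pow, ← Real.rpow_natCast (E₀ ^ (1/2:ℝ)) 2,
          ← Real.rpow_natCast (((τ₂ ^ (1-p) - τ₁ ^ (1-p)) / (1-p)) ^ (1/2:ℝ)) 2,
          ← Real.rpow_mul hE₀, ← Real.rpow_mul (by positivity)]
        norm_num
    _ = (E₀ / (1 - p)) * (τ₂ ^ (1 - p) - τ₁ ^ (1 - p)) := by ring
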